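/- For every θ ∈ ℝ, both roots of the quadratic polynomial f(z) = z^2 + (1/2)e^{-iθ} z + (1/2)e^{-iθ} lie in the closed unit disk. -/

import Mathlib

/-- Both roots of `z² + (1/2)e^{-iθ} z + (1/2)e^{-iθ}` lie in the closed unit disk. -/
theorem roots_in_closed_disk (θ : ℝ) (z : ℂ)
    (hz : z ^ 2 + (1 / 2) * Complex.exp (-(θ : ℂ) * Complex.I) * z
        + (1 / 2) * Complex.exp (-(θ : ℂ) * Complex.I) = 0) :
    ‖z‖ ≤ 1 := by
  have h1 : z ^ 2 = -((1 / 2) * Complex.exp (-(θ : ℂ) * Complex.I)) * (z + 1) := by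
    linear_combination hz
  have hc : ‖Complex.exp (-(θ : ℂ) * Complex.I)‖ = 1 := by
    simp [Complex.norm_exp]
  have h2 : ‖z‖ ^ 2 ≤ (‖z‖ + 1) / 2 := by
    have := congrArg norm h1
    rw [norm_pow, norm_mul, norm_neg, norm_mul, hc] at this
    have htri : ‖z + 1‖ ≤ ‖z‖ + 1 := by
      simpa using norm_add_le z 1
    rw [this]
    have h2n : ‖(1:ℂ)/2‖ = 1/2 := by norm_num
    rw [h2n]
    linarith
  nlinarith [norm_nonneg z]
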